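/- Let C_n be the cycle graph on n = 2q vertices with q ≥ 2. Then C_n has a k-resolving set if and only if k ≤ n − 2 = 2q − 2; moreover dim_k(C_n) = k + 1 for every k with 1 ≤ k ≤ q − 1, and dim_k(C_n) = k + 2 for every k with q ≤ k ≤ 2q − 2. -/

import Mathlib

open SimpleGraph Finset
open scoped Fin.CommRing

/-- A finset `S` of vertices is a `k`-resolving set for `G`: any two distinct vertices `u, w`
have different distances to at least `k` vertices of `S`. -/
def IsKResolvingSet {V : Type*} [DecidableEq V] (G : SimpleGraph V) (k : ℕ) (S : Finset V) : Prop :=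
  ∀ u w : V, u ≠ w → k ≤ (S.filter (fun v => G.dist u v ≠ G.dist w v)).card

variable {n : ℕ}

lemma val_neg' [NeZero n] (x : Fin n) : (-x).val = (n - x.val) % n := by
  rw [Fin.neg_def]

lemma cyc_adj_succ (hn : 2 ≤ n) (u : Fin n) :
    haveI : NeZero n := ⟨by omega⟩
    (cycleGraph n).Adj u (u + 1) := by
  haveI : NeZero n := ⟨by omega⟩
  rw [SimpleGraph.cycleGraph_adj']
  right
  rw [add_sub_cancel_left, Fin.val_one']
  exact Nat.mod_eq_of_lt hn

lemma cyc_walk (hn : 2 ≤ n) (k : ℕ) (u : Fin n) :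
    haveI : NeZero n := ⟨by omega⟩
    ∃ p : (cycleGraph n).Walk u (u + (k : Fin n)), p.length = k := by
  haveI : NeZero n := ⟨by omega⟩
  induction k generalizing u with
  | zero => exact ⟨(SimpleGraph.Walk.nil).copy rfl (by simp), by simp⟩
  | succ k ih =>
    obtain ⟨p, hp⟩ := ih (u + 1)
    refine ⟨((SimpleGraph.Walk.cons (cyc_adj_succ hn u) p).copy rfl (by push_cast; ring)), by simp [hp]⟩

lemma cyc_dist_le (hn : 2 ≤ n) (u v : Fin n) :
    (cycleGraph n).dist u v ≤ (v - u).val := by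
  haveI : NeZero n := ⟨by omega⟩
  obtain ⟨p, hp⟩ := cyc_walk hn (v - u).val u
  calc (cycleGraph n).dist u v
      ≤ (p.copy rfl (by rw [Fin.cast_val_eq_self, add_sub_cancel])).length :=
        SimpleGraph.dist_le _
    _ = (v - u).val := by simp [hp]

lemma cyc_walk_int (hn : 2 ≤ n) {u v : Fin n} (p : (cycleGraph n).Walk u v) :
    haveI : NeZero n := ⟨by omega⟩
    ∃ x : ℤ, x.natAbs ≤ p.length ∧ (x : Fin n) = v - u := by
  haveI : NeZero n := ⟨by omega⟩
  induction p with
  | nil => exact ⟨0, by simp⟩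
  | @cons a b c h p ih =>
    obtain ⟨x, hx, hcast⟩ := ih
    rw [SimpleGraph.cycleGraph_adj'] at h
    rcases h with h | h
    · have hab : a - b = 1 := by
        rw [← Fin.cast_val_eq_self (a - b), h, Nat.cast_one]
      refine ⟨x - 1, ?_, ?_⟩
      · simp only [SimpleGraph.Walk.length_cons]; omega
      · push_cast [hcast]
        rw [← hab]; ring
    · have hab : b - a = 1 := by
        rw [← Fin.cast_val_eq_self (b - a), h, Nat.cast_one]
      refine ⟨x + 1, ?_, ?_⟩
      · simp only [SimpleGraph.Walk.length_cons]; omega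
      · push_cast [hcast]
        rw [← hab]; ring

lemma cyc_dist_eq (hn : 2 ≤ n) (u v : Fin n) :
    (cycleGraph n).dist u v = min (v - u).val (u - v).val := by
  haveI : NeZero n := ⟨by omega⟩
  refine le_antisymm (le_min (cyc_dist_le hn u v)
    (by rw [SimpleGraph.dist_comm]; exact cyc_dist_le hn v u)) ?_
  have hreach : (cycleGraph n).Reachable u v := by
    obtain ⟨p, _⟩ := cyc_walk hn (v - u).val u
    rw [Fin.cast_val_eq_self, add_sub_cancel] at p
    exact ⟨p⟩
  obtain ⟨p, hp⟩ := hreach.exists_walk_length_eq_dist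
  obtain ⟨x, hx, hcast⟩ := cyc_walk_int hn p
  rw [hp] at hx
  rcases le_or_gt 0 x with hpos | hneg
  · have h1 : ((x.toNat : ℕ) : Fin n) = v - u := by
      rw [← Int.cast_natCast, Int.toNat_of_nonneg hpos]; exact hcast
    have h2 : (v - u).val = x.toNat % n := by rw [← h1, Fin.val_natCast]
    have : (v - u).val ≤ x.natAbs := by
      rw [h2]; exact le_trans (Nat.mod_le _ _) (by omega)
    omega
  · have h1 : (((-x).toNat : ℕ) : Fin n) = u - v := by
      have h0 : ((-x : ℤ) : Fin n) = u - v := by rw [Int.cast_neg, hcast]; ring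
      rw [← Int.cast_natCast, Int.toNat_of_nonneg (by omega : (0:ℤ) ≤ -x)]; exact h0
    have h2 : (u - v).val = (-x).toNat % n := by rw [← h1, Fin.val_natCast]
    have : (u - v).val ≤ x.natAbs := by
      rw [h2]; exact le_trans (Nat.mod_le _ _) (by omega)
    omega

section evenq
variable {q : ℕ} [NeZero (2 * q)]

lemma valq (hq : 2 ≤ q) : ((q : Fin (2 * q)) : ℕ) = q := by
  rw [Fin.val_natCast]; exact Nat.mod_eq_of_lt (by omega)

lemma qq0 (hq : 2 ≤ q) : (q : Fin (2 * q)) + (q : Fin (2 * q)) = 0 := by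
  apply Fin.ext
  rw [Fin.val_add, valq hq]
  simp [show q + q = 2 * q by ring, Nat.mod_self]

lemma key_mod (hq : 2 ≤ q) (a : ℕ) (ha : a < 2 * q) :
    (2 * q - a) % (2 * q) = if a = 0 then 0 else 2 * q - a := by
  split
  · simp [*, Nat.mod_self]
  · exact Nat.mod_eq_of_lt (by omega)

/-- characterization of equidistant vertices in the even cycle -/
lemma dist_eq_iff (hq : 2 ≤ q) {u w : Fin (2 * q)} (huw : u ≠ w) (v : Fin (2 * q)) :
    (cycleGraph (2 * q)).dist u v = (cycleGraph (2 * q)).dist w v ↔ v + v = u + w := by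
  rw [cyc_dist_eq (by omega), cyc_dist_eq (by omega)]
  constructor
  · intro h
    have hxy : v - u ≠ v - w := fun hc => huw (by linear_combination -hc)
    have ha : (u - v) = -(v - u) := by ring
    have hb : (w - v) = -(v - w) := by ring
    rw [ha, hb, val_neg', val_neg', key_mod hq _ (v - u).isLt,
      key_mod hq _ (v - w).isLt] at h
    have hab : (v - u).val ≠ (v - w).val := fun hc => hxy (Fin.ext hc)
    have ha' : (v - u).val < 2 * q := (v - u).isLt
    have hb' : (v - w).val < 2 * q := (v - w).isLt
    have hvw : (v - w).val = (2 * q - (v - u).val) % (2 * q) := by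
      rw [key_mod hq _ (v - u).isLt]
      split_ifs at h ⊢ <;> omega
    have hfin : v - w = -(v - u) := Fin.ext (by rw [val_neg']; exact hvw)
    linear_combination hfin
  · intro h
    have h1 : v - w = u - v := by linear_combination h
    have h2 : w - v = v - u := by linear_combination -h
    rw [h1, h2, Nat.min_comm]

lemma two_smul_zero (hq : 2 ≤ q) {z : Fin (2 * q)} (h : z + z = 0) :
    z = 0 ∨ z = (q : Fin (2 * q)) := by
  have hv : (z.val + z.val) % (2 * q) = 0 := by
    simpa [Fin.val_add] using congrArg Fin.val h
  obtain ⟨c, hc⟩ := Nat.dvd_of_mod_eq_zero hv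
  have hz : z.val < 2 * q := z.isLt
  have hc2 : c < 2 := by nlinarith
  interval_cases c
  · left; have : z.val = 0 := by omega
    exact Fin.ext (by simp [this])
  · right; exact Fin.ext (by rw [valq hq]; omega)

lemma mid_pair (hq : 2 ≤ q) {u w v1 v2 : Fin (2 * q)} (h1 : v1 + v1 = u + w)
    (h2 : v2 + v2 = u + w) : v2 = v1 ∨ v2 = v1 + (q : Fin (2 * q)) := by
  have h0 : (v2 - v1) + (v2 - v1) = 0 := by
    rw [sub_add_sub_comm, h2, h1, sub_self]
  rcases two_smul_zero hq h0 with h | h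
  · left; exact sub_eq_zero.mp h
  · right; rw [sub_eq_iff_eq_add] at h; rw [h, add_comm]

lemma filter_ne_subset (hq : 2 ≤ q) {u w : Fin (2 * q)} (huw : u ≠ w)
    {v1 v2 : Fin (2 * q)} (h1 : v1 + v1 = u + w) (h2 : v2 + v2 = u + w)
    (S : Finset (Fin (2 * q))) :
    S.filter (fun v => (cycleGraph (2 * q)).dist u v ≠ (cycleGraph (2 * q)).dist w v) ⊆
      (S.erase v1).erase v2 := by
  intro v hv
  rw [Finset.mem_filter] at hv
  obtain ⟨hvS, hvd⟩ := hv
  rw [Finset.mem_erase, Finset.mem_erase]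
  refine ⟨?_, ?_, hvS⟩
  · rintro rfl; exact hvd ((dist_eq_iff hq huw v).mpr h2)
  · rintro rfl; exact hvd ((dist_eq_iff hq huw v).mpr h1)

lemma card_filter_ge (hq : 2 ≤ q) {u w : Fin (2 * q)} (huw : u ≠ w)
    (S : Finset (Fin (2 * q))) :
    S.card - 2 ≤ (S.filter (fun v => (cycleGraph (2 * q)).dist u v ≠
      (cycleGraph (2 * q)).dist w v)).card := by
  have hsum := Finset.card_filter_add_card_filter_not (s := S)
    (p := fun v => (cycleGraph (2 * q)).dist u v ≠ (cycleGraph (2 * q)).dist w v)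
  have hle : (S.filter (fun v => ¬ ((cycleGraph (2 * q)).dist u v ≠
      (cycleGraph (2 * q)).dist w v))).card ≤ 2 := by
    rcases (S.filter (fun v => ¬ ((cycleGraph (2 * q)).dist u v ≠
      (cycleGraph (2 * q)).dist w v))).eq_empty_or_nonempty with hE | ⟨v1, hv1⟩
    · rw [hE]; simp
    · have hm1 := Finset.mem_filter.mp hv1
      have hC1 : v1 + v1 = u + w := (dist_eq_iff hq huw v1).mp (not_not.mp hm1.2)
      have hsub : S.filter (fun v => ¬ ((cycleGraph (2 * q)).dist u v ≠
          (cycleGraph (2 * q)).dist w v)) ⊆ {v1, v1 + (q : Fin (2 * q))} := by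
        intro v2 hv2
        have hm2 := Finset.mem_filter.mp hv2
        have hC2 : v2 + v2 = u + w := (dist_eq_iff hq huw v2).mp (not_not.mp hm2.2)
        rcases mid_pair hq hC1 hC2 with h | h <;> simp [h]
      exact (Finset.card_le_card hsub).trans
        ((Finset.card_insert_le _ _).trans (by simp))
  omega

lemma resolving_of_card (hq : 2 ≤ q) {k : ℕ} {S : Finset (Fin (2 * q))}
    (h : k + 2 ≤ S.card) : IsKResolvingSet (cycleGraph (2 * q)) k S := by
  intro u w huw
  have := card_filter_ge hq huw S
  omega

lemma fin2ne (hq : 2 ≤ q) : ((2 : ℕ) : Fin (2 * q)) ≠ 0 := by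
  intro hc
  have := congrArg Fin.val hc
  rw [Fin.val_cast_of_lt (by omega)] at this
  simp at this

lemma sub_one_ne_add_one (hq : 2 ≤ q) (x : Fin (2 * q)) : x - 1 ≠ x + 1 := by
  intro hc
  apply fin2ne hq
  push_cast
  linear_combination -hc

lemma val_add_q (hq : 2 ≤ q) (x : Fin (2 * q)) (hx : x.val < q) :
    (x + (q : Fin (2 * q))).val = x.val + q := by
  rw [Fin.val_add, valq hq]
  exact Nat.mod_eq_of_lt (by omega)

lemma add_q_ne_self (hq : 2 ≤ q) (x : Fin (2 * q)) : x + (q : Fin (2 * q)) ≠ x := by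
  intro hc
  have hq0 : (q : Fin (2 * q)) = 0 := by linear_combination hc
  have := congrArg Fin.val hq0
  rw [valq hq] at this
  simp at this
  omega

lemma resolving_block (hq : 2 ≤ q) {k : ℕ} (hk : k ≤ q - 1)
    (h : ∀ m ∈ Finset.range (k + 1), m < 2 * q) :
    IsKResolvingSet (cycleGraph (2 * q)) k (Finset.attachFin (Finset.range (k + 1)) h) := by
  intro u w huw
  have hsum := Finset.card_filter_add_card_filter_not
    (s := Finset.attachFin (Finset.range (k + 1)) h)
    (p := fun v => (cycleGraph (2 * q)).dist u v ≠ (cycleGraph (2 * q)).dist w v)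
  have hScard : (Finset.attachFin (Finset.range (k + 1)) h).card = k + 1 := by
    rw [Finset.card_attachFin, Finset.card_range]
  have hle : ((Finset.attachFin (Finset.range (k + 1)) h).filter
      (fun v => ¬ ((cycleGraph (2 * q)).dist u v ≠
        (cycleGraph (2 * q)).dist w v))).card ≤ 1 := by
    rw [Finset.card_le_one]
    intro a ha b hb
    have hma := Finset.mem_filter.mp ha
    have hmb := Finset.mem_filter.mp hb
    have hCa : a + a = u + w := (dist_eq_iff hq huw a).mp (not_not.mp hma.2)
    have hCb : b + b = u + w := (dist_eq_iff hq huw b).mp (not_not.mp hmb.2)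
    rcases mid_pair hq hCb hCa with hab | hab
    · exact hab
    · exfalso
      have hav : a.val < k + 1 := Finset.mem_range.mp ((Finset.mem_attachFin h).mp hma.1)
      have hbv : b.val < k + 1 := Finset.mem_range.mp ((Finset.mem_attachFin h).mp hmb.1)
      have := congrArg Fin.val hab
      rw [val_add_q hq b (by omega)] at this
      omega
  omega

lemma lower1 (hq : 2 ≤ q) {k : ℕ} {S : Finset (Fin (2 * q))} (hk : 1 ≤ k)
    (hres : IsKResolvingSet (cycleGraph (2 * q)) k S) : k + 1 ≤ S.card := by
  have h02 : (0 : Fin (2 * q)) ≠ ((2 : ℕ) : Fin (2 * q)) := fun hc =>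
    fin2ne hq hc.symm
  have hS1 : 1 ≤ S.card :=
    hk.trans ((hres 0 _ h02).trans (Finset.card_filter_le _ _))
  obtain ⟨s, hs⟩ := Finset.card_pos.mp (show 0 < S.card by omega)
  have huw : s - 1 ≠ s + 1 := sub_one_ne_add_one hq s
  have hC : s + s = (s - 1) + (s + 1) := by ring
  have hsub := filter_ne_subset hq huw hC hC S
  rw [Finset.erase_idem] at hsub
  have := (hres _ _ huw).trans (Finset.card_le_card hsub)
  rw [Finset.card_erase_of_mem hs] at this
  omega

lemma mod_q_eq (hq : 2 ≤ q) (a : ℕ) (ha : a < 2 * q) :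
    a % q = if a < q then a else a - q := by
  split
  · exact Nat.mod_eq_of_lt (by omega)
  · rw [Nat.mod_eq_sub_mod (by omega)]
    exact Nat.mod_eq_of_lt (by omega)

lemma lower2 (hq : 2 ≤ q) {k : ℕ} {S : Finset (Fin (2 * q))} (hkq : q ≤ k)
    (hres : IsKResolvingSet (cycleGraph (2 * q)) k S) : k + 2 ≤ S.card := by
  have h1 : k + 1 ≤ S.card := lower1 hq (by omega) hres
  by_contra hlt
  push_neg at hlt
  have hfree : ∀ x ∈ S, x + (q : Fin (2 * q)) ∉ S := by
    intro x hx hxq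
    have hne : x + (q : Fin (2 * q)) ≠ x := add_q_ne_self hq x
    have huw : x - 1 ≠ x + 1 := sub_one_ne_add_one hq x
    have hC1 : x + x = (x - 1) + (x + 1) := by ring
    have hC2 : (x + (q : Fin (2 * q))) + (x + (q : Fin (2 * q))) = (x - 1) + (x + 1) := by
      linear_combination qq0 hq
    have hsub := filter_ne_subset hq huw hC1 hC2 S
    have hcard := (hres _ _ huw).trans (Finset.card_le_card hsub)
    rw [Finset.card_erase_of_mem (Finset.mem_erase.mpr ⟨hne, hxq⟩),
      Finset.card_erase_of_mem hx] at hcard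
    omega
  have hq0 : 0 < q := by omega
  have hcard : S.card ≤ q := by
    have hinj : Set.InjOn (fun x : Fin (2 * q) => (⟨x.val % q, Nat.mod_lt _ hq0⟩ : Fin q)) S := by
      intro x hx y hy hxy
      simp only [Fin.mk.injEq] at hxy
      rw [mod_q_eq hq _ x.isLt, mod_q_eq hq _ y.isLt] at hxy
      by_contra hne
      have hvne : x.val ≠ y.val := fun hc => hne (Fin.ext hc)
      rcases (by split_ifs at hxy <;> omega :
          y.val = x.val + q ∨ x.val = y.val + q) with h | h
      · have : y = x + (q : Fin (2 * q)) :=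
          Fin.ext (by rw [val_add_q hq x (by omega)]; omega)
        exact hfree x hx (this ▸ hy)
      · have : x = y + (q : Fin (2 * q)) :=
          Fin.ext (by rw [val_add_q hq y (by omega)]; omega)
        exact hfree y hy (this ▸ hx)
    have := Finset.card_le_card_of_injOn _ (fun x _ => Finset.mem_univ _) hinj
    simpa using this
  omega

end evenq

theorem evenCycle_kMetricDimension (q : ℕ) (hq : 2 ≤ q) :
    (∀ k : ℕ, (∃ S : Finset (Fin (2 * q)),
        IsKResolvingSet (SimpleGraph.cycleGraph (2 * q)) k S) ↔ k ≤ 2 * q - 2) ∧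
    (∀ k : ℕ, 1 ≤ k → k ≤ q - 1 →
      sInf {m : ℕ | ∃ S : Finset (Fin (2 * q)),
        IsKResolvingSet (SimpleGraph.cycleGraph (2 * q)) k S ∧ S.card = m} = k + 1) ∧
    ∀ k : ℕ, q ≤ k → k ≤ 2 * q - 2 →
      sInf {m : ℕ | ∃ S : Finset (Fin (2 * q)),
        IsKResolvingSet (SimpleGraph.cycleGraph (2 * q)) k S ∧ S.card = m} = k + 2 := by
  haveI : NeZero (2 * q) := ⟨by omega⟩
  refine ⟨?_, ?_, ?_⟩
  · intro k
    constructor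
    · rintro ⟨S, hS⟩
      have huw : (0 : Fin (2 * q)) ≠ ((2 : ℕ) : Fin (2 * q)) := fun hc =>
        fin2ne hq hc.symm
      have hC1 : (1 : Fin (2 * q)) + 1 = 0 + ((2 : ℕ) : Fin (2 * q)) := by
        push_cast; ring
      have hC2 : ((1 : Fin (2 * q)) + (q : Fin (2 * q))) + (1 + (q : Fin (2 * q)))
          = 0 + ((2 : ℕ) : Fin (2 * q)) := by
        push_cast; linear_combination qq0 hq
      have hne : (1 : Fin (2 * q)) + (q : Fin (2 * q)) ≠ 1 := add_q_ne_self hq 1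
      have hsub := (filter_ne_subset hq huw hC1 hC2 S).trans
        (Finset.erase_subset_erase _ (Finset.erase_subset_erase _ (Finset.subset_univ S)))
      have hcard := (hS _ _ huw).trans (Finset.card_le_card hsub)
      rw [Finset.card_erase_of_mem (Finset.mem_erase.mpr ⟨hne, Finset.mem_univ _⟩),
        Finset.card_erase_of_mem (Finset.mem_univ _), Finset.card_univ,
        Fintype.card_fin] at hcard
      omega
    · intro hk
      refine ⟨Finset.univ, ?_⟩
      intro u w huw
      have := card_filter_ge hq huw (Finset.univ : Finset (Fin (2 * q)))
      rw [Finset.card_univ, Fintype.card_fin] at this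
      omega
  · intro k hk1 hkq
    have hb : ∀ m ∈ Finset.range (k + 1), m < 2 * q := by
      intro m hm; rw [Finset.mem_range] at hm; omega
    have hS := resolving_block hq hkq hb
    apply le_antisymm
    · apply Nat.sInf_le
      exact ⟨_, hS, by rw [Finset.card_attachFin, Finset.card_range]⟩
    · refine le_csInf ⟨k + 1, ⟨_, hS, by rw [Finset.card_attachFin, Finset.card_range]⟩⟩ ?_
      rintro m ⟨S, hS', rfl⟩
      exact lower1 hq hk1 hS'
  · intro k hkq hk2
    have hb : ∀ m ∈ Finset.range (k + 2), m < 2 * q := by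
      intro m hm; rw [Finset.mem_range] at hm; omega
    have hS : IsKResolvingSet (SimpleGraph.cycleGraph (2 * q)) k
        (Finset.attachFin (Finset.range (k + 2)) hb) :=
      resolving_of_card hq (by rw [Finset.card_attachFin, Finset.card_range])
    apply le_antisymm
    · apply Nat.sInf_le
      exact ⟨_, hS, by rw [Finset.card_attachFin, Finset.card_range]⟩
    · refine le_csInf ⟨k + 2, ⟨_, hS, by rw [Finset.card_attachFin, Finset.card_range]⟩⟩ ?_
      rintro m ⟨S, hS', rfl⟩
      exact lower2 hq hkq hS'
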